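/- arXiv:1506.05254 — 3 statements merged into one kernel-verified Lean document; each statement's English description precedes it below -/
import Mathlib

section
/- Parallel stochastic nodes (graph (3) of Figure 1): let X, Y be finite types, p : ℝ → X → ℝ and q : ℝ → Y → ℝ differentiable parameterized pmfs, and f : X → Y → ℝ. At θ₀ with all probabilities positive, the derivative of θ ↦ ∑ x, ∑ y, p θ x * q θ y * f x y equals ∑ x, ∑ y, p θ₀ x * q θ₀ y * (deriv (fun θ => Real.log (p θ x)) θ₀ + deriv (fun θ => Real.log (q θ y)) θ₀) * f x y. -/
theorem parallel_stochastic_nodes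
    {X Y : Type*} [Fintype X] [Fintype Y]
    (p : ℝ → X → ℝ) (q : ℝ → Y → ℝ) (f : X → Y → ℝ) (θ₀ : ℝ)
    (hpnn : ∀ θ x, 0 ≤ p θ x) (hpsum : ∀ θ, ∑ x, p θ x = 1)
    (hpdiff : ∀ x, Differentiable ℝ (fun θ => p θ x))
    (hqnn : ∀ θ y, 0 ≤ q θ y) (hqsum : ∀ θ, ∑ y, q θ y = 1)
    (hqdiff : ∀ y, Differentiable ℝ (fun θ => q θ y))
    (hppos : ∀ x, 0 < p θ₀ x) (hqpos : ∀ y, 0 < q θ₀ y) :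
    deriv (fun θ => ∑ x, ∑ y, p θ x * q θ y * f x y) θ₀ =
      ∑ x, ∑ y, p θ₀ x * q θ₀ y *
        (deriv (fun θ => Real.log (p θ x)) θ₀ +
         deriv (fun θ => Real.log (q θ y)) θ₀) * f x y := by
  have key : HasDerivAt (fun θ => ∑ x, ∑ y, p θ x * q θ y * f x y)
      (∑ x, ∑ y, (deriv (fun θ => p θ x) θ₀ * q θ₀ y +
        p θ₀ x * deriv (fun θ => q θ y) θ₀) * f x y) θ₀ := by
    apply HasDerivAt.fun_sum
    intro x _
    apply HasDerivAt.fun_sum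
    intro y _
    exact (((hpdiff x θ₀).hasDerivAt.mul (hqdiff y θ₀).hasDerivAt).mul_const (f x y))
  rw [key.deriv]
  refine Finset.sum_congr rfl fun x _ => Finset.sum_congr rfl fun y _ => ?_
  rw [deriv.log (hpdiff x θ₀) (hppos x).ne', deriv.log (hqdiff y θ₀) (hqpos y).ne']
  rw [mul_comm _ (f x y), mul_comm _ (f x y)]
  congr 1
  field_simp [(hppos x).ne', (hqpos y).ne']
end

section
/- Markov reward chain estimator (graph (5) of Figure 1): let X₁, X₂ be finite types, p₁ : ℝ → X₁ → ℝ and p₂ : ℝ → X₁ → X₂ → ℝ differentiable parameterized (conditional) pmfs, and f₁ : X₁ → ℝ, f₂ : X₂ → ℝ costs. Then at θ₀ (all probabilities positive), the derivative of θ ↦ ∑ x₁, ∑ x₂, p₁ θ x₁ * p₂ θ x₁ x₂ * (f₁ x₁ + f₂ x₂) equals ∑ x₁, ∑ x₂, p₁ θ₀ x₁ * p₂ θ₀ x₁ x₂ * (deriv (fun θ => Real.log (p₁ θ x₁)) θ₀ * (f₁ x₁ + f₂ x₂) + deriv (fun θ => Real.log (p₂ θ x₁ x₂)) θ₀ * f₂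 x₂). -/
lemma deriv_log_comp (p : ℝ → ℝ) (θ₀ : ℝ) (hd : Differentiable ℝ p)
    (hp : p θ₀ ≠ 0) :
    deriv (fun θ => Real.log (p θ)) θ₀ = deriv p θ₀ / p θ₀ := by
  have h := ((Real.hasDerivAt_log hp).comp θ₀ (hd θ₀).hasDerivAt).deriv
  rw [show (fun θ => Real.log (p θ)) = Real.log ∘ p from rfl, h]; ring

theorem markov_reward_chain_estimator
    {X₁ X₂ : Type*} [Fintype X₁] [Fintype X₂]
    (p₁ : ℝ → X₁ → ℝ) (p₂ : ℝ → X₁ → X₂ → ℝ)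
    (f₁ : X₁ → ℝ) (f₂ : X₂ → ℝ) (θ₀ : ℝ)
    (hp₁nn : ∀ θ x₁, 0 ≤ p₁ θ x₁) (hp₁sum : ∀ θ, ∑ x₁, p₁ θ x₁ = 1)
    (hp₁diff : ∀ x₁, Differentiable ℝ (fun θ => p₁ θ x₁))
    (hp₂nn : ∀ θ x₁ x₂, 0 ≤ p₂ θ x₁ x₂)
    (hp₂sum : ∀ θ x₁, ∑ x₂, p₂ θ x₁ x₂ = 1)
    (hp₂diff : ∀ x₁ x₂, Differentiable ℝ (fun θ => p₂ θ x₁ x₂))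
    (hp₁pos : ∀ x₁, 0 < p₁ θ₀ x₁) (hp₂pos : ∀ x₁ x₂, 0 < p₂ θ₀ x₁ x₂) :
    deriv (fun θ => ∑ x₁, ∑ x₂, p₁ θ x₁ * p₂ θ x₁ x₂ * (f₁ x₁ + f₂ x₂)) θ₀ =
      ∑ x₁, ∑ x₂, p₁ θ₀ x₁ * p₂ θ₀ x₁ x₂ *
        (deriv (fun θ => Real.log (p₁ θ x₁)) θ₀ * (f₁ x₁ + f₂ x₂) +
         deriv (fun θ => Real.log (p₂ θ x₁ x₂)) θ₀ * f₂ x₂) := by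
  have hderiv : deriv (fun θ => ∑ x₁, ∑ x₂, p₁ θ x₁ * p₂ θ x₁ x₂ * (f₁ x₁ + f₂ x₂)) θ₀ =
      ∑ x₁, ∑ x₂, (deriv (fun θ => p₁ θ x₁) θ₀ * p₂ θ₀ x₁ x₂ +
        p₁ θ₀ x₁ * deriv (fun θ => p₂ θ x₁ x₂) θ₀) * (f₁ x₁ + f₂ x₂) := by
    apply HasDerivAt.deriv
    apply HasDerivAt.fun_sum
    intro x₁ _
    apply HasDerivAt.fun_sum
    intro x₂ _
    exact (((hp₁diff x₁ θ₀).hasDerivAt.mul (hp₂diff x₁ x₂ θ₀).hasDerivAt).mul_const _)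
  rw [hderiv]
  have hsum2 : ∀ x₁, ∑ x₂, deriv (fun θ => p₂ θ x₁ x₂) θ₀ = 0 := by
    intro x₁
    have h : HasDerivAt (fun θ => ∑ x₂, p₂ θ x₁ x₂)
        (∑ x₂, deriv (fun θ => p₂ θ x₁ x₂) θ₀) θ₀ :=
      HasDerivAt.fun_sum (fun x₂ _ => (hp₂diff x₁ x₂ θ₀).hasDerivAt)
    have h2 : HasDerivAt (fun θ => ∑ x₂, p₂ θ x₁ x₂) 0 θ₀ := by
      have he : (fun θ => ∑ x₂, p₂ θ x₁ x₂) = fun _ => (1:ℝ) :=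
        funext (fun θ => hp₂sum θ x₁)
      rw [he]; exact hasDerivAt_const _ _
    exact h.unique h2
  refine Finset.sum_congr rfl fun x₁ _ => ?_
  have key : ∀ x₂, p₁ θ₀ x₁ * p₂ θ₀ x₁ x₂ *
      (deriv (fun θ => Real.log (p₁ θ x₁)) θ₀ * (f₁ x₁ + f₂ x₂) +
       deriv (fun θ => Real.log (p₂ θ x₁ x₂)) θ₀ * f₂ x₂) =
      deriv (fun θ => p₁ θ x₁) θ₀ * p₂ θ₀ x₁ x₂ * (f₁ x₁ + f₂ x₂) +
      p₁ θ₀ x₁ * deriv (fun θ => p₂ θ x₁ x₂) θ₀ * f₂ x₂ := by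
    intro x₂
    rw [deriv_log_comp _ _ (hp₁diff x₁) (hp₁pos x₁).ne',
        deriv_log_comp _ _ (hp₂diff x₁ x₂) (hp₂pos x₁ x₂).ne']
    have h1 := (hp₁pos x₁).ne'
    have h2 := (hp₂pos x₁ x₂).ne'
    field_simp
  simp only [key]
  have expand : ∀ x₂, (deriv (fun θ => p₁ θ x₁) θ₀ * p₂ θ₀ x₁ x₂ +
      p₁ θ₀ x₁ * deriv (fun θ => p₂ θ x₁ x₂) θ₀) * (f₁ x₁ + f₂ x₂) =
      (deriv (fun θ => p₁ θ x₁) θ₀ * p₂ θ₀ x₁ x₂ * (f₁ x₁ + f₂ x₂) +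
       p₁ θ₀ x₁ * deriv (fun θ => p₂ θ x₁ x₂) θ₀ * f₂ x₂) +
      p₁ θ₀ x₁ * f₁ x₁ * deriv (fun θ => p₂ θ x₁ x₂) θ₀ := by
    intro x₂; ring
  simp only [expand, Finset.sum_add_distrib, ← Finset.mul_sum, hsum2, mul_zero, add_zero]
end

section
/- REINFORCE for a two-step MDP (finite): let S, A be finite types, with initial state distribution ρ : S → ℝ, parameterized policy π : ℝ → S → A → ℝ (a differentiable conditional pmf), transition kernel P : S → A → S → ℝ (θ-independent conditional pmf), and rewards r : S → A → ℝ. Define J(θ) = ∑ s₁ a₁ s₂ a₂, ρ s₁ * π θ s₁ a₁ * P s₁ a₁ s₂ * π θ s₂ a₂ * (r s₁ a₁ + r s₂ a₂). Then at θ₀ with all policy probabilities positive, deriv J θ₀ = ∑ s₁ a₁ s₂ a₂, ρ s₁ * π θ₀ s₁ a₁ * P s₁ a₁ s₂ * π θ₀ s₂ a₂ * (deriv (fun θ => Real.log (π θ s₁ a₁)) θ₀ * (r s₁ a₁ + r s₂ a₂) + deriv (fun θ => Real.log (π θ s₂ a₂)) θ₀ * r s₂ a₂). -/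
theorem reinforce_two_step_mdp
    {S A : Type*} [Fintype S] [Fintype A]
    (ρ : S → ℝ) (π : ℝ → S → A → ℝ) (P : S → A → S → ℝ) (r : S → A → ℝ) (θ₀ : ℝ)
    (hρnn : ∀ s, 0 ≤ ρ s) (hρsum : ∑ s, ρ s = 1)
    (hπnn : ∀ θ s a, 0 ≤ π θ s a) (hπsum : ∀ θ s, ∑ a, π θ s a = 1)
    (hπdiff : ∀ s a, Differentiable ℝ (fun θ => π θ s a))
    (hπpos : ∀ s a, 0 < π θ₀ s a)
    (hPnn : ∀ s a s', 0 ≤ P s a s') (hPsum : ∀ s a, ∑ s', P s a s' = 1) :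
    deriv (fun θ => ∑ s₁, ∑ a₁, ∑ s₂, ∑ a₂,
      ρ s₁ * π θ s₁ a₁ * P s₁ a₁ s₂ * π θ s₂ a₂ * (r s₁ a₁ + r s₂ a₂)) θ₀ =
    ∑ s₁, ∑ a₁, ∑ s₂, ∑ a₂,
      ρ s₁ * π θ₀ s₁ a₁ * P s₁ a₁ s₂ * π θ₀ s₂ a₂ *
        (deriv (fun θ => Real.log (π θ s₁ a₁)) θ₀ * (r s₁ a₁ + r s₂ a₂) +
         deriv (fun θ => Real.log (π θ s₂ a₂)) θ₀ * r s₂ a₂) := by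
  have hlog : ∀ s a, deriv (fun θ => Real.log (π θ s a)) θ₀
      = deriv (fun θ => π θ s a) θ₀ / π θ₀ s a := fun s a =>
    (((hπdiff s a θ₀).hasDerivAt).log (hπpos s a).ne').deriv
  have hDsum : ∀ s, ∑ a, deriv (fun θ => π θ s a) θ₀ = 0 := by
    intro s
    have h1 : HasDerivAt (fun θ => ∑ a, π θ s a)
        (∑ a, deriv (fun θ => π θ s a) θ₀) θ₀ :=
      HasDerivAt.fun_sum fun a _ => (hπdiff s a θ₀).hasDerivAt
    have h2 : (fun θ => ∑ a, π θ s a) = fun _ => (1:ℝ) := funext fun θ => hπsum θ s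
    rw [h2] at h1
    simpa using h1.unique (hasDerivAt_const θ₀ 1)
  have hmain : HasDerivAt (fun θ => ∑ s₁, ∑ a₁, ∑ s₂, ∑ a₂,
      ρ s₁ * π θ s₁ a₁ * P s₁ a₁ s₂ * π θ s₂ a₂ * (r s₁ a₁ + r s₂ a₂))
      (∑ s₁, ∑ a₁, ∑ s₂, ∑ a₂,
        (ρ s₁ * deriv (fun θ => π θ s₁ a₁) θ₀ * P s₁ a₁ s₂ * π θ₀ s₂ a₂
          + ρ s₁ * π θ₀ s₁ a₁ * P s₁ a₁ s₂ * deriv (fun θ => π θ s₂ a₂) θ₀)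
          * (r s₁ a₁ + r s₂ a₂)) θ₀ := by
    refine HasDerivAt.fun_sum fun s₁ _ => HasDerivAt.fun_sum fun a₁ _ =>
      HasDerivAt.fun_sum fun s₂ _ => HasDerivAt.fun_sum fun a₂ _ => ?_
    have h1 := (hπdiff s₁ a₁ θ₀).hasDerivAt
    have h2 := (hπdiff s₂ a₂ θ₀).hasDerivAt
    have h3 := (((h1.const_mul (ρ s₁)).mul_const (P s₁ a₁ s₂)).fun_mul h2).mul_const
      (r s₁ a₁ + r s₂ a₂)
    convert h3 using 1
  rw [hmain.deriv]
  simp only [hlog]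
  refine Finset.sum_congr rfl fun s₁ _ => Finset.sum_congr rfl fun a₁ _ =>
    Finset.sum_congr rfl fun s₂ _ => ?_
  have hkey : ∀ a₂, (ρ s₁ * deriv (fun θ => π θ s₁ a₁) θ₀ * P s₁ a₁ s₂ * π θ₀ s₂ a₂
      + ρ s₁ * π θ₀ s₁ a₁ * P s₁ a₁ s₂ * deriv (fun θ => π θ s₂ a₂) θ₀)
      * (r s₁ a₁ + r s₂ a₂)
      = ρ s₁ * π θ₀ s₁ a₁ * P s₁ a₁ s₂ * π θ₀ s₂ a₂ *
        (deriv (fun θ => π θ s₁ a₁) θ₀ / π θ₀ s₁ a₁ * (r s₁ a₁ + r s₂ a₂)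
          + deriv (fun θ => π θ s₂ a₂) θ₀ / π θ₀ s₂ a₂ * r s₂ a₂)
        + ρ s₁ * π θ₀ s₁ a₁ * P s₁ a₁ s₂ * r s₁ a₁ * deriv (fun θ => π θ s₂ a₂) θ₀ := by
    intro a₂
    have h1 := (hπpos s₁ a₁).ne'
    have h2 := (hπpos s₂ a₂).ne'
    field_simp
    ring
  simp only [hkey, Finset.sum_add_distrib, ← Finset.mul_sum, hDsum, mul_zero, add_zero]
end
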